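/- Let real numbers α, β, γ satisfy Condition (C), and additionally assume that if γ < 0 then α ≤ 1/2 or β ≥ −γ. Then there is a constant c > 0 such that for every m ∈ ℤ with m ≠ 0, Σ |k−m|^{−2α} |k|^{−2γ} ≤ c |m|^{2β}, where the sum is over all k ∈ ℤ with |k| < 2|m| and 0 < |k−m| < |k|/2. -/

import Mathlib

open MeasureTheory Filter Topology Set
open scoped ENNReal
noncomputable section

/-- `k`-th Fourier coefficient of an `L`-periodic function `f : ℝ → ℝ`. -/
def fCoeff (L : ℝ) (f : ℝ → ℝ) (k : ℤ) : ℂ :=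
  (1 / (L : ℂ)) * ∫ x in (0:ℝ)..L,
    (f x : ℂ) * Complex.exp (-2 * (Real.pi : ℂ) * Complex.I * (k : ℂ) * (x : ℂ) / (L : ℂ))

/-- Membership in the homogeneous Sobolev space `Ḣ^α` of real-valued, `L`-periodic,
zero-mean functions, described through the sequence of Fourier coefficients. -/
structure InHdot (α : ℝ) (u : ℤ → ℂ) : Prop where
  zero : u 0 = 0
  conjSymm : ∀ k : ℤ, u (-k) = starRingEnd ℂ (u k)
  summable : Summable fun k : ℤ => |(k : ℝ)| ^ (2 * α) * ‖u k‖ ^ 2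

/-- The homogeneous Sobolev norm `|u|_α = (∑_{k≠0} |k|^{2α}|u_k|²)^{1/2}`. -/
def Hnorm (α : ℝ) (u : ℤ → ℂ) : ℝ :=
  Real.sqrt (∑' k : ℤ, |(k : ℝ)| ^ (2 * α) * ‖u k‖ ^ 2)

/-- The constant `c = (2π/L)^4` appearing in the semigroup `e^{-tA}`, `A = ∂_x^4`. -/
def csg (L : ℝ) : ℝ := (2 * Real.pi / L) ^ 4

/-- The analytic semigroup `e^{-tA}`, acting diagonally on Fourier coefficients. -/
def heatSG (L t : ℝ) (u : ℤ → ℂ) : ℤ → ℂ :=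
  fun k => Real.exp (-(csg L) * t * (k : ℝ) ^ 4) • u k

/-- Fourier coefficients of the nonlinearity `∂_x^2((∂_x h)^2)`. -/
def nonlin (L : ℝ) (u : ℤ → ℂ) : ℤ → ℂ :=
  fun k => (csg L * (k : ℝ) ^ 2) • ∑' l : ℤ, ((l : ℂ) * ((k - l : ℤ) : ℂ)) * u l * u (k - l)

/-- The mild solution map
`F(h)(t) = e^{-tA}h₀ - ∫₀ᵗ e^{-(t-s)A} ∂_x^2((∂_x h(s))^2) ds`. -/
def mildMap (L : ℝ) (h0 : ℤ → ℂ) (h : ℝ → ℤ → ℂ) (t : ℝ) : ℤ → ℂ :=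
  fun k => heatSG L t h0 k -
    ∫ s in (0:ℝ)..t, Real.exp (-(csg L) * (t - s) * (k : ℝ) ^ 4) • nonlin L (h s) k

/-- The weight `s^{(2α+1)/8}|u|_{1+α}`. -/
def wnorm (α s : ℝ) (u : ℤ → ℂ) : ℝ := s ^ ((2 * α + 1) / 8) * Hnorm (1 + α) u

/-- `Kfun α h t = sup_{s ∈ (0,t]} s^{(2α+1)/8}|h(s)|_{1+α}`; in particular
`K₀(t) = Kfun α (fun s => heatSG L s h₀) t` and `‖h‖_{α,T} = Kfun α h T`. -/
def Kfun (α : ℝ) (h : ℝ → ℤ → ℂ) (t : ℝ) : ℝ :=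
  sSup ((fun s => wnorm α s (h s)) '' Set.Ioc 0 t)

/-- The space `S_α(T)`: continuity `(0,T] → Ḣ^{1+α}` together with finiteness of
the weighted sup-norm `‖·‖_{α,T}`. -/
def MemS (α T : ℝ) (h : ℝ → ℤ → ℂ) : Prop :=
  (∀ t ∈ Set.Ioc (0:ℝ) T, InHdot (1 + α) (h t)) ∧
  (∀ t ∈ Set.Ioc (0:ℝ) T, ∀ ε > 0, ∃ δ > 0, ∀ s ∈ Set.Ioc (0:ℝ) T,
      |s - t| < δ → Hnorm (1 + α) (h s - h t) < ε) ∧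
  BddAbove ((fun s => wnorm α s (h s)) '' Set.Ioc 0 T)

/-- Condition (C) on the exponents `α`, `β`, `γ`. -/
def CondC (α β γ : ℝ) : Prop :=
  0 ≤ α ∧ 0 ≤ β ∧ 1 / 2 ≤ α + β + γ ∧
  ((α = 1 / 2 ∨ β = 1 / 2 ∨ γ = 1 / 2) → 1 / 2 < α + β + γ) ∧
  (γ < 0 → α ≤ 1 / 2 ∨ β ≤ 1 / 2 ∨ -γ ≤ α ∨ -γ ≤ β)


lemma bern_step {x p : ℝ} (hx : 1 ≤ x) (hp0 : 0 ≤ p) (hp1 : p < 1) :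
    x ^ (-p) ≤ (1 - p)⁻¹ * (x ^ (1 - p) - (x - 1) ^ (1 - p)) := by
  have hq0 : (0:ℝ) < 1 - p := by linarith
  have hx0 : (0:ℝ) < x := by linarith
  have hinv : 1 / x ≤ 1 := by
    rw [div_le_one hx0]; linarith
  have h1 : x - 1 = x * (1 + -(1/x)) := by field_simp; ring
  have h2 : (x - 1) ^ (1 - p) = x ^ (1-p) * (1 + -(1/x)) ^ (1-p) := by
    rw [h1, Real.mul_rpow hx0.le (by linarith)]
  have h3 : (1 + -(1/x)) ^ (1-p) ≤ 1 + (1-p) * (-(1/x)) :=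
    rpow_one_add_le_one_add_mul_self (by linarith) hq0.le (by linarith)
  have h4 : x ^ (1-p) = x * x ^ (-p) := by
    rw [show (1:ℝ)-p = 1 + -p by ring, Real.rpow_add hx0, Real.rpow_one]
  have h5 : (x - 1) ^ (1 - p) ≤ x ^ (1-p) - (1-p) * x ^ (-p) := by
    calc (x - 1) ^ (1 - p) = x ^ (1-p) * (1 + -(1/x)) ^ (1-p) := h2
    _ ≤ x ^ (1-p) * (1 + (1-p) * (-(1/x))) :=
        mul_le_mul_of_nonneg_left h3 (Real.rpow_nonneg hx0.le _)
    _ = x ^ (1-p) - (1-p) * x ^ (-p) := by rw [h4]; field_simp; ring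
  rw [le_inv_mul_iff₀ hq0]
  nlinarith

lemma sum_Icc_rpow_le {p : ℝ} (hp0 : 0 ≤ p) (hp1 : p < 1) (M : ℕ) :
    ∑ n ∈ Finset.Icc 1 M, ((n:ℝ))^(-p) ≤ (1-p)⁻¹ * (M:ℝ)^(1-p) := by
  induction M with
  | zero => simp [Real.zero_rpow (show (1:ℝ)-p ≠ 0 by linarith)]
  | succ M ih =>
    rw [Finset.sum_Icc_succ_top (Nat.le_add_left 1 M)]
    have hb := bern_step (x := ((M:ℝ)+1)) (p := p)
      (by have : (0:ℝ) ≤ (M:ℝ) := Nat.cast_nonneg M; linarith) hp0 hp1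
    rw [show ((M:ℝ)+1)-1 = (M:ℝ) by ring, mul_sub] at hb
    push_cast
    linarith

lemma sum_IccInt_eq (p : ℝ) (M : ℕ) :
    ∑ j ∈ Finset.Icc (1:ℤ) (M:ℤ), |(j:ℝ)| ^ (-p) = ∑ n ∈ Finset.Icc 1 M, ((n:ℝ)) ^ (-p) := by
  refine Finset.sum_nbij' (fun j => j.toNat) (fun n => (n:ℤ)) ?_ ?_ ?_ ?_ ?_
  · intro a ha
    simp only [Finset.mem_Icc] at ha ⊢
    omega
  · intro a ha
    simp only [Finset.mem_Icc] at ha ⊢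
    omega
  · intro a ha
    simp only [Finset.mem_Icc] at ha
    show ((a.toNat : ℤ)) = a
    omega
  · intro a ha; show ((a:ℤ).toNat) = a; simp
  · intro a ha
    simp only [Finset.mem_Icc] at ha
    rw [abs_of_nonneg (by exact_mod_cast (by omega : (0:ℤ) ≤ a))]
    congr 1
    exact_mod_cast (Int.toNat_of_nonneg (by omega)).symm

lemma sum_sym_le (p : ℝ) (M : ℕ) :
    ∑ j ∈ (Finset.Icc (-(M:ℤ)) (M:ℤ)).erase 0, |(j:ℝ)| ^ (-p)
      ≤ 2 * ∑ n ∈ Finset.Icc 1 M, ((n:ℝ)) ^ (-p) := by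
  have hsplit : (Finset.Icc (-(M:ℤ)) (M:ℤ)).erase 0
      = Finset.Icc (-(M:ℤ)) (-1) ∪ Finset.Icc (1:ℤ) (M:ℤ) := by
    ext j
    simp only [Finset.mem_erase, Finset.mem_Icc, Finset.mem_union]
    omega
  have hdisj : Disjoint (Finset.Icc (-(M:ℤ)) (-1)) (Finset.Icc (1:ℤ) (M:ℤ)) := by
    rw [Finset.disjoint_left]
    intro a ha hb
    simp only [Finset.mem_Icc] at ha hb
    omega
  have hneg : ∑ j ∈ Finset.Icc (-(M:ℤ)) (-1), |(j:ℝ)| ^ (-p)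
      = ∑ j ∈ Finset.Icc (1:ℤ) (M:ℤ), |(j:ℝ)| ^ (-p) := by
    refine Finset.sum_nbij' (fun j => -j) (fun j => -j) ?_ ?_ ?_ ?_ ?_
    · intro a ha; simp only [Finset.mem_Icc] at ha ⊢; omega
    · intro a ha; simp only [Finset.mem_Icc] at ha ⊢; omega
    · intro a _; ring
    · intro a _; ring
    · intro a _; push_cast; rw [abs_neg]
  rw [hsplit, Finset.sum_union hdisj, hneg, sum_IccInt_eq]
  ring_nf
  linarith

lemma conv_aux (α β γ p C δ : ℝ) (hα : 0 ≤ α) (hp0 : 0 ≤ p) (hp2α : p ≤ 2*α)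
    (hCpos : 0 < C) (hδ0 : 0 ≤ δ) (hδβ : δ + -(2*γ) ≤ 2*β)
    (hbound : ∀ M : ℕ, ∑ n ∈ Finset.Icc 1 M, ((n:ℝ))^(-p) ≤ C * (M:ℝ)^δ) :
    ∃ c > (0:ℝ), ∀ m : ℤ, m ≠ 0 →
      ∑ k ∈ (Finset.Icc (-(2 * (m.natAbs : ℤ))) (2 * (m.natAbs : ℤ))).filter
          (fun k => |k| < 2 * |m| ∧ 0 < |k - m| ∧ 2 * |k - m| < |k|),
        |(k : ℝ) - (m : ℝ)| ^ (-(2 * α)) * |(k : ℝ)| ^ (-(2 * γ))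
      ≤ c * |(m : ℝ)| ^ (2 * β) := by
  set Cγ : ℝ := (3/2:ℝ)^(2*γ) + (2:ℝ)^(-(2*γ)) with hCγ
  have hCγpos : 0 < Cγ :=
    add_pos (Real.rpow_pos_of_pos (by norm_num) _) (Real.rpow_pos_of_pos (by norm_num) _)
  refine ⟨2 * C * Cγ, by positivity, ?_⟩
  intro m hm
  set N := m.natAbs with hN
  have hN1 : 1 ≤ N := Int.natAbs_pos.mpr hm
  have hmZ : (N:ℤ) = |m| := (Int.abs_eq_natAbs m).symm
  have hmR : |(m:ℝ)| = (N:ℝ) := by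
    rw [← Int.cast_abs, ← hmZ]; norm_num
  have hmR1 : (1:ℝ) ≤ |(m:ℝ)| := by rw [hmR]; exact_mod_cast hN1
  have hmRpos : (0:ℝ) < |(m:ℝ)| := by linarith
  set S := (Finset.Icc (-(2 * (N : ℤ))) (2 * (N : ℤ))).filter
      (fun k => |k| < 2 * |m| ∧ 0 < |k - m| ∧ 2 * |k - m| < |k|) with hS
  -- per-term bound
  have hterm : ∀ k ∈ S, |(k:ℝ) - (m:ℝ)| ^ (-(2*α)) * |(k:ℝ)| ^ (-(2*γ))
      ≤ |((k - m : ℤ):ℝ)| ^ (-p) * (Cγ * |(m:ℝ)| ^ (-(2*γ))) := by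
    intro k hk
    rw [hS, Finset.mem_filter, Finset.mem_Icc] at hk
    obtain ⟨⟨hk1, hk2⟩, hk3, hk4, hk5⟩ := hk
    simp only [Int.abs_eq_natAbs] at hk3 hk4 hk5
    -- integer facts
    have hjlbZ : (1:ℤ) ≤ |k - m| := by simp only [Int.abs_eq_natAbs]; omega
    have hkubZ : |k| ≤ 2 * (N:ℤ) := by simp only [Int.abs_eq_natAbs]; omega
    have hklbZ : 2 * (N:ℤ) ≤ 3 * |k| := by simp only [Int.abs_eq_natAbs]; omega
    -- real versions
    have ekm : |(k:ℝ) - (m:ℝ)| = |((k - m : ℤ):ℝ)| := by push_cast; ring_nf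
    have haR : (1:ℝ) ≤ |((k - m : ℤ):ℝ)| := by exact_mod_cast hjlbZ
    have hkub : |(k:ℝ)| ≤ 2 * |(m:ℝ)| := by
      rw [hmR]; exact_mod_cast hkubZ
    have hklb : (2/3) * |(m:ℝ)| ≤ |(k:ℝ)| := by
      rw [hmR]
      have h3 : 2 * (N:ℝ) ≤ 3 * |(k:ℝ)| := by exact_mod_cast hklbZ
      linarith
    have b1 : |(k:ℝ) - (m:ℝ)| ^ (-(2*α)) ≤ |((k - m : ℤ):ℝ)| ^ (-p) := by
      rw [ekm]
      exact Real.rpow_le_rpow_of_exponent_le haR (by linarith)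
    have b2 : |(k:ℝ)| ^ (-(2*γ)) ≤ Cγ * |(m:ℝ)| ^ (-(2*γ)) := by
      rcases le_or_gt 0 γ with hγ | hγ
      · have hpos : (0:ℝ) < (2/3) * |(m:ℝ)| := by linarith
        calc |(k:ℝ)| ^ (-(2*γ))
            ≤ ((2/3) * |(m:ℝ)|) ^ (-(2*γ)) :=
              Real.rpow_le_rpow_of_nonpos hpos hklb (by linarith)
          _ = (2/3:ℝ)^(-(2*γ)) * |(m:ℝ)|^(-(2*γ)) :=
              Real.mul_rpow (by norm_num) (abs_nonneg _)
          _ ≤ Cγ * |(m:ℝ)|^(-(2*γ)) := by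
              refine mul_le_mul_of_nonneg_right ?_ (Real.rpow_nonneg (abs_nonneg _) _)
              have h23 : ((2:ℝ)/3)^(-(2*γ)) = ((3:ℝ)/2)^(2*γ) := by
                rw [show ((2:ℝ)/3) = ((3:ℝ)/2)⁻¹ by norm_num,
                  Real.inv_rpow (by norm_num), ← Real.rpow_neg (by norm_num), neg_neg]
              rw [h23, hCγ]
              exact le_add_of_nonneg_right (Real.rpow_nonneg (by norm_num) _)
      · calc |(k:ℝ)| ^ (-(2*γ))
            ≤ (2 * |(m:ℝ)|) ^ (-(2*γ)) :=
              Real.rpow_le_rpow (abs_nonneg _) hkub (by linarith)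
          _ = (2:ℝ)^(-(2*γ)) * |(m:ℝ)|^(-(2*γ)) :=
              Real.mul_rpow (by norm_num) (abs_nonneg _)
          _ ≤ Cγ * |(m:ℝ)|^(-(2*γ)) := by
              refine mul_le_mul_of_nonneg_right ?_ (Real.rpow_nonneg (abs_nonneg _) _)
              rw [hCγ]
              exact le_add_of_nonneg_left (Real.rpow_nonneg (by norm_num) _)
    exact mul_le_mul b1 b2 (Real.rpow_nonneg (abs_nonneg _) _)
      (Real.rpow_nonneg (abs_nonneg _) _)
  -- shift the sum
  have hshift : ∑ k ∈ S, |((k - m : ℤ):ℝ)| ^ (-p)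
      ≤ 2 * ∑ n ∈ Finset.Icc 1 N, ((n:ℝ)) ^ (-p) := by
    have hinj : ∀ x ∈ S, ∀ y ∈ S, x - m = y - m → x = y := by
      intro x _ y _ h; omega
    calc ∑ k ∈ S, |((k - m : ℤ):ℝ)| ^ (-p)
        = ∑ j ∈ S.image (· - m), |(j:ℝ)| ^ (-p) := (Finset.sum_image (f := fun j : ℤ => |(j:ℝ)| ^ (-p)) hinj).symm
      _ ≤ ∑ j ∈ (Finset.Icc (-(N:ℤ)) (N:ℤ)).erase 0, |(j:ℝ)| ^ (-p) := by
          refine Finset.sum_le_sum_of_subset_of_nonneg ?_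
            (fun j _ _ => Real.rpow_nonneg (abs_nonneg _) _)
          intro j hj
          simp only [Finset.mem_image] at hj
          obtain ⟨k, hk, rfl⟩ := hj
          rw [hS, Finset.mem_filter, Finset.mem_Icc] at hk
          obtain ⟨⟨hk1, hk2⟩, hk3, hk4, hk5⟩ := hk
          simp only [Int.abs_eq_natAbs] at hk3 hk4 hk5
          simp only [Finset.mem_erase, Finset.mem_Icc]
          omega
      _ ≤ 2 * ∑ n ∈ Finset.Icc 1 N, ((n:ℝ)) ^ (-p) := sum_sym_le p N
  -- assemble
  calc ∑ k ∈ S, |(k:ℝ) - (m:ℝ)| ^ (-(2*α)) * |(k:ℝ)| ^ (-(2*γ))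
      ≤ ∑ k ∈ S, |((k - m : ℤ):ℝ)| ^ (-p) * (Cγ * |(m:ℝ)| ^ (-(2*γ))) :=
        Finset.sum_le_sum hterm
    _ = (∑ k ∈ S, |((k - m : ℤ):ℝ)| ^ (-p)) * (Cγ * |(m:ℝ)| ^ (-(2*γ))) := by
        rw [← Finset.sum_mul]
    _ ≤ (2 * ∑ n ∈ Finset.Icc 1 N, ((n:ℝ)) ^ (-p)) * (Cγ * |(m:ℝ)| ^ (-(2*γ))) := by
        refine mul_le_mul_of_nonneg_right hshift (by positivity)
    _ ≤ (2 * (C * (N:ℝ)^δ)) * (Cγ * |(m:ℝ)| ^ (-(2*γ))) := by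
        refine mul_le_mul_of_nonneg_right ?_ (by positivity)
        have := hbound N
        linarith
    _ = (2 * C * Cγ) * (|(m:ℝ)|^δ * |(m:ℝ)| ^ (-(2*γ))) := by rw [hmR]; ring
    _ = (2 * C * Cγ) * |(m:ℝ)| ^ (δ + -(2*γ)) := by
        rw [Real.rpow_add hmRpos]
    _ ≤ (2 * C * Cγ) * |(m:ℝ)| ^ (2*β) := by
        refine mul_le_mul_of_nonneg_left
          (Real.rpow_le_rpow_of_exponent_le hmR1 hδβ) (by positivity)

theorem surfaceGrowth_convolution_sum_estimate' (α β γ : ℝ)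
    (hC : (0 ≤ α ∧ 0 ≤ β ∧ 1 / 2 ≤ α + β + γ ∧
      ((α = 1 / 2 ∨ β = 1 / 2 ∨ γ = 1 / 2) → 1 / 2 < α + β + γ) ∧
      (γ < 0 → α ≤ 1 / 2 ∨ β ≤ 1 / 2 ∨ -γ ≤ α ∨ -γ ≤ β)))
    (hextra : γ < 0 → α ≤ 1 / 2 ∨ -γ ≤ β) :
    ∃ c > (0:ℝ), ∀ m : ℤ, m ≠ 0 →
      ∑ k ∈ (Finset.Icc (-(2 * (m.natAbs : ℤ))) (2 * (m.natAbs : ℤ))).filter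
          (fun k => |k| < 2 * |m| ∧ 0 < |k - m| ∧ 2 * |k - m| < |k|),
        |(k : ℝ) - (m : ℝ)| ^ (-(2 * α)) * |(k : ℝ)| ^ (-(2 * γ))
      ≤ c * |(m : ℝ)| ^ (2 * β) := by
  obtain ⟨hα, hβ, hsum, hstrict, -⟩ := hC
  by_cases h1 : 2*α < 1 ∨ 0 < β + γ
  · set p := max 0 (1 - 2*β - 2*γ) with hp
    have hp0 : 0 ≤ p := le_max_left _ _
    have hp2α : p ≤ 2*α := max_le (by linarith) (by linarith)
    have hp1 : p < 1 := by
      rcases h1 with h | h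
      · exact lt_of_le_of_lt hp2α h
      · exact max_lt (by norm_num) (by linarith)
    have hpr : 1 - 2*β - 2*γ ≤ p := le_max_right _ _
    exact conv_aux α β γ p (1-p)⁻¹ (1-p) hα hp0 hp2α (inv_pos.mpr (by linarith))
      (by linarith) (by linarith) (fun M => sum_Icc_rpow_le hp0 hp1 M)
  · push_neg at h1
    obtain ⟨h2α, hbγ0⟩ := h1
    have h2α' : 1 < 2*α := by
      rcases eq_or_lt_of_le h2α with h | h
      · exfalso
        have hh : α = 1/2 := by linarith
        have := hstrict (Or.inl hh)
        linarith
      · exact h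
    have hbγ : β + γ = 0 := by
      refine le_antisymm hbγ0 ?_
      rcases lt_or_ge γ 0 with hγ | hγ
      · rcases hextra hγ with h | h
        · linarith
        · linarith
      · linarith
    have hsummable : Summable (fun n:ℕ => (n:ℝ)^(-(2*α))) :=
      Real.summable_nat_rpow.mpr (by linarith)
    set C := ∑' n:ℕ, (n:ℝ)^(-(2*α)) with hC'
    have hC1 : (1:ℝ) ≤ C := by
      have h := Summable.le_tsum hsummable 1 (fun j _ => Real.rpow_nonneg (Nat.cast_nonneg j) _)
      simpa using h
    refine conv_aux α β γ (2*α) C 0 hα (by linarith) le_rfl (by linarith) le_rfl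
      (by linarith) ?_
    intro M
    rw [Real.rpow_zero, mul_one]
    exact Summable.sum_le_tsum _ (fun i _ => Real.rpow_nonneg (Nat.cast_nonneg i) _) hsummable

/-- Under Condition (C) (with `α ≤ 1/2` or `β ≥ -γ` when `γ < 0`),
`Σ_{|k|<2|m|, 0<|k-m|<|k|/2} |k-m|^{-2α}|k|^{-2γ} ≤ c |m|^{2β}` uniformly in `m ≠ 0`. -/
theorem surfaceGrowth_convolution_sum_estimate (α β γ : ℝ) (hC : CondC α β γ)
    (hextra : γ < 0 → α ≤ 1 / 2 ∨ -γ ≤ β) :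
    ∃ c > (0:ℝ), ∀ m : ℤ, m ≠ 0 →
      ∑ k ∈ (Finset.Icc (-(2 * (m.natAbs : ℤ))) (2 * (m.natAbs : ℤ))).filter
          (fun k => |k| < 2 * |m| ∧ 0 < |k - m| ∧ 2 * |k - m| < |k|),
        |(k : ℝ) - (m : ℝ)| ^ (-(2 * α)) * |(k : ℝ)| ^ (-(2 * γ))
      ≤ c * |(m : ℝ)| ^ (2 * β) :=
  surfaceGrowth_convolution_sum_estimate' α β γ hC hextra
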